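/- arXiv:2502.18455 — 2 statements merged into one kernel-verified Lean document; each statement's English description precedes it below -/
import Mathlib

section
/- Let A, V : (−∞, T] → (0,∞) be C¹ functions with A' = A, and suppose that for each t, A(t) ≤ (∫ H²)^{1/3} (∫ H^{-1})^{2/3} where V'(t) = ∫ H^{-1} and ∫ H² < 16π. If A(t)^{3/2} − (36π)^{1/2} V(t) → 0 as t → −∞, then A(t)^{3/2} < (36π)^{1/2} V(t) for all t ∈ (−∞, T]. -/
open Filter

/- ODE comparison underlying the sub-Euclidean isoperimetric ratio along inverse mean
curvature flow: A is the area, V the enclosed volume, Hsq t = ∫_{Σ_t} H², Hinv t = ∫_{Σ_t} H⁻¹.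
A' = A, Hölder gives A ≤ (∫H²)^{1/3}(∫H⁻¹)^{2/3}, V' = ∫H⁻¹, ∫H² < 16π, and
A^{3/2} − (36π)^{1/2}V → 0 as t → −∞; then A^{3/2} < (36π)^{1/2} V on (−∞,T]. -/
theorem stmt3 (T : ℝ) (A V Hsq Hinv : ℝ → ℝ)
    (hApos : ∀ t ≤ T, 0 < A t)
    (hVpos : ∀ t ≤ T, 0 < V t)
    (hHsqnn : ∀ t ≤ T, 0 ≤ Hsq t)
    (hHinvpos : ∀ t ≤ T, 0 < Hinv t)
    (hA' : ∀ t ≤ T, HasDerivAt A (A t) t)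
    (hV' : ∀ t ≤ T, HasDerivAt V (Hinv t) t)
    (hHolder : ∀ t ≤ T, A t ≤ Hsq t ^ ((1:ℝ)/3) * Hinv t ^ ((2:ℝ)/3))
    (hHsq : ∀ t ≤ T, Hsq t < 16 * Real.pi)
    (hlim : Tendsto (fun t => A t ^ ((3:ℝ)/2) - Real.sqrt (36 * Real.pi) * V t)
      atBot (nhds 0)) :
    ∀ t ≤ T, A t ^ ((3:ℝ)/2) < Real.sqrt (36 * Real.pi) * V t := by
  set c := Real.sqrt (36 * Real.pi) with hc
  set f : ℝ → ℝ := fun t => A t ^ ((3:ℝ)/2) - c * V t with hf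
  -- derivative of f
  have hderiv : ∀ t ≤ T, HasDerivAt f ((3/2) * A t ^ ((3:ℝ)/2) - c * Hinv t) t := by
    intro t ht
    have h1 : HasDerivAt (fun s => A s ^ ((3:ℝ)/2))
        (A t * ((3:ℝ)/2) * A t ^ ((3:ℝ)/2 - 1)) t :=
      (hA' t ht).rpow_const (Or.inl (hApos t ht).ne')
    rw [show ((3:ℝ)/2 - 1) = 1/2 by norm_num] at h1
    have h2 : A t * ((3:ℝ)/2) * A t ^ ((1:ℝ)/2) = (3/2) * A t ^ ((3:ℝ)/2) := by
      have h3 : A t ^ ((3:ℝ)/2) = A t * A t ^ ((1:ℝ)/2) := by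
        rw [show ((3:ℝ)/2) = 1 + (1:ℝ)/2 by norm_num, Real.rpow_add (hApos t ht),
          Real.rpow_one]
      rw [h3]; ring
    rw [h2] at h1
    exact h1.sub ((hV' t ht).const_mul c)
  -- the sqrt constant
  have hcval : (3/2 : ℝ) * Real.sqrt (16 * Real.pi) = c := by
    rw [hc, show (36 : ℝ) * Real.pi = (9/4) * (16 * Real.pi) by ring,
      Real.sqrt_mul (by norm_num : (0:ℝ) ≤ 9/4),
      show (9/4 : ℝ) = (3/2)^2 by norm_num, Real.sqrt_sq (by norm_num : (0:ℝ) ≤ 3/2)]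
  -- the derivative is negative
  have hneg : ∀ t ≤ T, (3/2 : ℝ) * A t ^ ((3:ℝ)/2) - c * Hinv t < 0 := by
    intro t ht
    have hAn : (0:ℝ) ≤ A t := (hApos t ht).le
    have hHn := hHsqnn t ht
    have hIn := (hHinvpos t ht).le
    have key : A t ^ ((3:ℝ)/2) ≤ Hsq t ^ ((1:ℝ)/2) * Hinv t := by
      have h := Real.rpow_le_rpow hAn (hHolder t ht) (by norm_num : (0:ℝ) ≤ 3/2)
      rw [Real.mul_rpow (Real.rpow_nonneg hHn _) (Real.rpow_nonneg hIn _),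
        ← Real.rpow_mul hHn, ← Real.rpow_mul hIn] at h
      norm_num at h
      exact h
    have hsq : Hsq t ^ ((1:ℝ)/2) < Real.sqrt (16 * Real.pi) := by
      rw [Real.sqrt_eq_rpow]
      exact Real.rpow_lt_rpow hHn (hHsq t ht) (by norm_num)
    have h3 : (3/2 : ℝ) * A t ^ ((3:ℝ)/2) ≤ (3/2) * (Hsq t ^ ((1:ℝ)/2) * Hinv t) := by
      linarith
    have h4 : (3/2 : ℝ) * (Hsq t ^ ((1:ℝ)/2) * Hinv t)
        < (3/2) * (Real.sqrt (16 * Real.pi) * Hinv t) := by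
      have := hHinvpos t ht
      nlinarith
    have h5 : (3/2 : ℝ) * (Real.sqrt (16 * Real.pi) * Hinv t) = c * Hinv t := by
      rw [← hcval]; ring
    linarith
  -- f is strictly decreasing on Iic T
  have hanti : StrictAntiOn f (Set.Iic T) := by
    apply strictAntiOn_of_deriv_neg (convex_Iic T)
    · intro t ht
      exact (hderiv t ht).continuousAt.continuousWithinAt
    · intro t ht
      rw [interior_Iic] at ht
      rw [(hderiv t ht.le).deriv]
      exact hneg t ht.le
  -- f ≤ 0 on Iic T
  have hle : ∀ s ≤ T, f s ≤ 0 := by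
    intro s hs
    refine ge_of_tendsto hlim ?_
    filter_upwards [eventually_lt_atBot s] with u hu
    exact (hanti (le_of_lt (lt_of_lt_of_le hu hs)) hs hu).le
  -- conclude
  intro t ht
  have h1 : f t < f (t - 1) := hanti (by linarith : t - 1 ≤ T) ht (by linarith)
  have h2 : f (t - 1) ≤ 0 := hle (t - 1) (by linarith)
  have : f t < 0 := lt_of_lt_of_le h1 h2
  simpa [hf, sub_neg] using this
end

section
/- For c > 0, the mountain pass min-max value of the functional A^c in Euclidean ℝ³ equals ω_c(ℝ³) = (4π/3)(2/c)², attained along the family of concentric round balls at the ball of radius 2/c. -/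
/-- The mountain pass min-max value of a functional F over continuous paths
{Ω_t}_{t∈[0,1]} with Ω₀ = x₀ (the empty set) and F(Ω₁) < 0. -/
noncomputable def mountainPassValue {X : Type*} [TopologicalSpace X]
    (x₀ : X) (F : X → ℝ) : EReal :=
  sInf {c : EReal | ∃ γ : ℝ → X, ContinuousOn γ (Set.Icc 0 1) ∧ γ 0 = x₀ ∧
    F (γ 1) < 0 ∧ c = ⨆ t : Set.Icc (0:ℝ) 1, (F (γ t.1) : EReal)}

-- cube of the isoperimetric term
lemma cube_iso (v : ℝ) (hv : 0 ≤ v) :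
    ((4*Real.pi)^((1:ℝ)/3) * (3*v)^((2:ℝ)/3))^3 = 36 * Real.pi * v^2 := by
  have h4 : (0:ℝ) ≤ 4 * Real.pi := by positivity
  have h3 : (0:ℝ) ≤ 3 * v := by linarith
  rw [mul_pow, ← Real.rpow_natCast ((4*Real.pi)^((1:ℝ)/3)) 3,
    ← Real.rpow_natCast ((3*v)^((2:ℝ)/3)) 3, ← Real.rpow_mul h4, ← Real.rpow_mul h3]
  norm_num
  ring

-- value of the isoperimetric term at the critical volume
lemma iso_at_crit (c : ℝ) (hc : 0 < c) :
    (4*Real.pi)^((1:ℝ)/3) * (3*((4*Real.pi/3)*(2/c)^3))^((2:ℝ)/3)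
      = 4 * Real.pi * (2/c)^2 := by
  have h1 : 3*((4*Real.pi/3)*(2/c)^3) = (4*Real.pi) * (2/c)^3 := by ring
  have h4 : (0:ℝ) ≤ 4 * Real.pi := by positivity
  have h2 : (0:ℝ) ≤ (2/c)^3 := by positivity
  rw [h1, Real.mul_rpow h4 h2, ← Real.rpow_natCast (2/c) 3, ← Real.rpow_mul (by positivity),
    ← mul_assoc, ← Real.rpow_add (by positivity)]
  norm_num

/- The mountain pass min-max value of A^c(Ω) = Area(∂Ω) − c·Vol(Ω) in Euclidean ℝ³
equals ω_c(ℝ³) = (4π/3)(2/c)², attained along the family of concentric round balls at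
the ball of radius 2/c.  Abstract formulation: X is the space of compactly supported
Caccioppoli sets with x₀ = ∅, Vol continuous, satisfying the sharp Euclidean
isoperimetric inequality Area ≥ (4π)^{1/3}(3·Vol)^{2/3}, and containing the continuous
family of concentric balls with Area(B_r) = 4πr², Vol(B_r) = (4π/3)r³. -/
theorem stmt17 {X : Type*} [TopologicalSpace X] (x₀ : X)
    (Area Vol : X → ℝ) (hVolCont : Continuous Vol)
    (hA0 : Area x₀ = 0) (hV0 : Vol x₀ = 0) (hVnn : ∀ x, 0 ≤ Vol x)
    (hiso : ∀ x, (4 * Real.pi) ^ ((1:ℝ)/3) * (3 * Vol x) ^ ((2:ℝ)/3) ≤ Area x)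
    (balls : ℝ → X) (hballs : Continuous balls) (hb0 : balls 0 = x₀)
    (hbA : ∀ r : ℝ, 0 ≤ r → Area (balls r) = 4 * Real.pi * r ^ 2)
    (hbV : ∀ r : ℝ, 0 ≤ r → Vol (balls r) = (4 * Real.pi / 3) * r ^ 3)
    (c : ℝ) (hc : 0 < c) :
    mountainPassValue x₀ (fun x => Area x - c * Vol x) =
      (((4 * Real.pi / 3) * (2 / c) ^ 2 : ℝ) : EReal) := by
  have hπ := Real.pi_pos
  set M : ℝ := (4 * Real.pi / 3) * (2 / c) ^ 2 with hM
  set F : X → ℝ := fun x => Area x - c * Vol x with hF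
  -- the critical volume
  set vM : ℝ := (4 * Real.pi / 3) * (2 / c) ^ 3 with hvM
  have hvMnn : 0 ≤ vM := by positivity
  -- any set with the critical volume has F ≥ M
  have hkey : ∀ x : X, Vol x = vM → M ≤ F x := by
    intro x hx
    have h1 := hiso x
    rw [hx, hvM] at h1
    rw [iso_at_crit c hc] at h1
    simp only [hF, hx, hvM, hM]
    have h2 : 4 * Real.pi * (2/c)^2 - c * ((4 * Real.pi / 3) * (2/c)^3)
        = (4 * Real.pi / 3) * (2/c)^2 := by field_simp; ring
    linarith
  apply le_antisymm
  · -- upper bound: use the family of balls, γ t = balls (4/c * t)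
    apply sInf_le
    refine ⟨fun t => balls (4/c * t), (hballs.comp (continuous_const.mul continuous_id)).continuousOn,
      by simp [hb0], ?_, ?_⟩
    · -- F at the ball of radius 4/c is negative
      have hr : (0:ℝ) ≤ 4/c * 1 := by positivity
      simp only [hF, hbA _ hr, hbV _ hr]
      have : 4/c * 1 = 4/c := by ring
      rw [this]
      have h4 : 4 * Real.pi * (4/c)^2 - c * (4 * Real.pi / 3 * (4/c)^3) = -(64 * Real.pi/(3*c^2)) := by
        field_simp; ring
      rw [h4]
      have : (0:ℝ) < 64 * Real.pi / (3*c^2) := by positivity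
      linarith
    · -- the sup along the ball family equals M
      apply le_antisymm
      · -- M ≤ value at t = 1/2
        have hmem : (1/2 : ℝ) ∈ Set.Icc (0:ℝ) 1 := by norm_num
        have := le_iSup (fun t : Set.Icc (0:ℝ) 1 => (F (balls (4/c * t.1)) : EReal)) ⟨1/2, hmem⟩
        refine le_trans ?_ this
        apply EReal.coe_le_coe_iff.mpr
        apply hkey
        have hr : (0:ℝ) ≤ 4/c * (1/2) := by positivity
        rw [hbV _ hr, hvM]
        have : 4/c * (1/2) = 2/c := by ring
        rw [this]
      · -- each value ≤ M
        apply iSup_le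
        rintro ⟨t, ht0, ht1⟩
        apply EReal.coe_le_coe_iff.mpr
        set r : ℝ := 4/c * t with hr
        have hrnn : 0 ≤ r := by positivity
        simp only [hF, hbA _ hrnn, hbV _ hrnn, hM]
        -- 4πr² − (4π/3)c r³ ≤ (4π/3)(2/c)²
        have key : 0 ≤ (c*r + 1) * (c*r - 2)^2 :=
          mul_nonneg (by positivity) (sq_nonneg _)
        have hc2 : (0:ℝ) < c^2 := by positivity
        have expand : (4*Real.pi/3*(2/c)^2) - (4*Real.pi*r^2 - c*(4*Real.pi/3*r^3))
            = (4*Real.pi/(3*c^2))*((c*r+1)*(c*r-2)^2) := by field_simp; ring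
        have hnn : 0 ≤ (4*Real.pi/(3*c^2))*((c*r+1)*(c*r-2)^2) :=
          mul_nonneg (by positivity) key
        rw [← hr, hbA _ hrnn, hbV _ hrnn]
        linarith
  · -- lower bound
    apply le_sInf
    rintro b ⟨γ, hγc, hγ0, hγ1, rfl⟩
    -- volume along the path is continuous, 0 at start, large at end
    have hvcont : ContinuousOn (fun t => Vol (γ t)) (Set.Icc 0 1) :=
      hVolCont.comp_continuousOn hγc
    have hv0 : Vol (γ 0) = 0 := by rw [hγ0, hV0]
    -- Vol (γ 1) ≥ vM
    have hv1 : vM ≤ Vol (γ 1) := by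
      set v := Vol (γ 1) with hv
      have hvnn : 0 ≤ v := hVnn _
      have hiso1 := hiso (γ 1)
      have hlt : (4 * Real.pi) ^ ((1:ℝ)/3) * (3 * v) ^ ((2:ℝ)/3) < c * v := by
        simp only [hF] at hγ1; linarith
      have hvpos : 0 < v := by
        rcases hvnn.lt_or_eq with h | h
        · exact h
        · exfalso
          rw [← h] at hlt
          simp only [mul_zero, Real.zero_rpow (by norm_num : (2:ℝ)/3 ≠ 0)] at hlt
          norm_num at hlt
      -- cube the inequality
      have hcube : ((4 * Real.pi) ^ ((1:ℝ)/3) * (3 * v) ^ ((2:ℝ)/3))^3 < (c*v)^3 := by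
        apply pow_lt_pow_left₀ hlt (by positivity)
        norm_num
      rw [cube_iso v hvnn] at hcube
      -- 36π v² < c³ v³ ⟹ 36π < c³ v ⟹ v ≥ vM
      have h36 : 36 * Real.pi < c^3 * v := by
        have hv2 : 0 < v^2 := by positivity
        nlinarith
      have hc3 : (0:ℝ) < c^3 := by positivity
      have hvMc : vM * c^3 = 32*Real.pi/3 := by rw [hvM]; field_simp; ring
      nlinarith [h36, hc3, hπ, hvMc]
    -- IVT: find t₀ with Vol (γ t₀) = vM
    have hsub := intermediate_value_Icc (by norm_num : (0:ℝ) ≤ 1) hvcont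
    have hvMmem : vM ∈ Set.Icc (Vol (γ 0)) (Vol (γ 1)) := by
      rw [hv0]; exact ⟨hvMnn, hv1⟩
    obtain ⟨t₀, ht₀, hvt₀⟩ := hsub hvMmem
    calc (M : EReal) ≤ (F (γ t₀) : EReal) := EReal.coe_le_coe_iff.mpr (hkey _ hvt₀)
      _ ≤ ⨆ t : Set.Icc (0:ℝ) 1, (F (γ t.1) : EReal) :=
        le_iSup (fun t : Set.Icc (0:ℝ) 1 => (F (γ t.1) : EReal)) ⟨t₀, ht₀⟩
end
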